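/- Every element of (ℤ/nℤ) ⊕ (ℤ/nℤ) is an integer multiple of a basis element, i.e., for every g in (ℤ/nℤ) ⊕ (ℤ/nℤ) there exists an element v which is part of a generating pair (a basis of the group as a ℤ/nℤ-module) and an integer d such that g = d·v. -/

import Mathlib

/-- Every element of `(ℤ/nℤ) ⊕ (ℤ/nℤ)` is an integer multiple of a basis element,
i.e. of an element `v` which is part of a pair `v, w` for which
`(x, y) ↦ x • v + y • w` is a bijection. -/
theorem stmt_1 (n : ℕ) (g : ZMod n × ZMod n) :
    ∃ v w : ZMod n × ZMod n,
      Function.Bijective (fun p : ZMod n × ZMod n => p.1 • v + p.2 • w) ∧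
      ∃ d : ℤ, g = d • v := by
  obtain ⟨a, ha⟩ := ZMod.intCast_surjective (n := n) g.1
  obtain ⟨b, hb⟩ := ZMod.intCast_surjective (n := n) g.2
  by_cases h0 : Int.gcd a b = 0
  · have ha0 : a = 0 := (Int.gcd_eq_zero_iff.mp h0).1
    have hb0 : b = 0 := (Int.gcd_eq_zero_iff.mp h0).2
    refine ⟨(1, 0), (0, 1), ?_, 0, ?_⟩
    · have : (fun p : ZMod n × ZMod n => p.1 • ((1 : ZMod n), (0 : ZMod n))
          + p.2 • ((0 : ZMod n), (1 : ZMod n))) = id := by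
        funext p; simp [Prod.ext_iff]
      rw [this]; exact Function.bijective_id
    · have : g = (0, 0) := by
        rw [Prod.ext_iff]; constructor
        · rw [← ha, ha0]; simp
        · rw [← hb, hb0]; simp
      simp [this]
  · set d : ℤ := (Int.gcd a b : ℤ) with hd
    set x : ℤ := a / d with hx
    set y : ℤ := b / d with hy
    have hdvda : d ∣ a := Int.gcd_dvd_left a b
    have hdvdb : d ∣ b := Int.gcd_dvd_right a b
    have hax : a = d * x := (Int.mul_ediv_cancel' hdvda).symm
    have hby : b = d * y := (Int.mul_ediv_cancel' hdvdb).symm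
    have hcop : IsCoprime x y := by
      rw [Int.isCoprime_iff_gcd_eq_one]
      exact Int.gcd_div_gcd_div_gcd (Nat.pos_of_ne_zero h0)
    obtain ⟨t, s, hts⟩ := hcop
    refine ⟨((x : ZMod n), (y : ZMod n)), ((-s : ℤ), (t : ZMod n)), ?_, d, ?_⟩
    · have key : (t : ZMod n) * x + s * y = 1 := by
        have := congrArg (fun z : ℤ => (z : ZMod n)) hts
        push_cast at this
        linear_combination this
      rw [Function.bijective_iff_has_inverse]
      refine ⟨fun q => (t * q.1 + s * q.2, -y * q.1 + x * q.2), ?_, ?_⟩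
      · intro p
        simp only [Prod.smul_mk, smul_eq_mul, Prod.mk_add_mk, Prod.ext_iff, Prod.fst, Prod.snd]
        push_cast
        constructor
        · linear_combination p.1 * key
        · linear_combination p.2 * key
      · intro q
        simp only [Prod.smul_mk, smul_eq_mul, Prod.mk_add_mk, Prod.ext_iff, Prod.fst, Prod.snd]
        push_cast
        constructor
        · linear_combination q.1 * key
        · linear_combination q.2 * key
    · rw [Prod.ext_iff]
      constructor
      · show g.1 = d • ((x : ZMod n))
        rw [← ha, hax]; push_cast [zsmul_eq_mul]; ring
      · show g.2 = d • ((y : ZMod n))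
        rw [← hb, hby]; push_cast [zsmul_eq_mul]; ring
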